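/- For n, k, t, d positive integers with d ≥ 2k and (d+1) | t, suppose M is a t×n binary matrix that is d-runlength constrained and the map x ↦ Mx (integer matrix-vector product) is injective on binary vectors of Hamming weight exactly k. Then log₂ C(n,k) ≤ log₂ |{y ∈ {0,...,k}^t : Σ_i y_i ≤ kt/(d+1)}|, and consequently k log₂(n/k) ≤ t · h(k/(d+1)) + (kt/(d+1)) log₂(k+1), where h is the binary entropy function. -/

import Mathlib

section Aux

-- L1: column weight bound
lemma colwt17 {t d : ℕ} (hdvd : (d+1) ∣ t) (x : Fin t → Bool)
    (hrl : ∀ i i' : Fin t, i < i' → x i = true → x i' = true →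
      d ≤ (Finset.univ.filter (fun j : Fin t => i < j ∧ j < i' ∧ x j = false)).card) :
    (Finset.univ.filter (fun i => x i = true)).card ≤ t / (d+1) := by
  classical
  have hgap : ∀ i i' : Fin t, i < i' → x i = true → x i' = true →
      (i : ℕ) + d + 1 ≤ (i' : ℕ) := by
    intro i i' h hi hi'
    have h1 := hrl i i' h hi hi'
    have h2 : (Finset.univ.filter (fun j : Fin t => i < j ∧ j < i' ∧ x j = false))
        ⊆ Finset.Ioo i i' := by
      intro j hj
      simp only [Finset.mem_filter, Finset.mem_Ioo] at hj ⊢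
      exact ⟨hj.2.1, hj.2.2.1⟩
    have h3 := (Finset.card_le_card h2)
    rw [Fin.card_Ioo] at h3
    have : (i : ℕ) < (i' : ℕ) := h
    omega
  have hinj : Set.InjOn (fun i : Fin t => (i : ℕ) / (d+1))
      ((Finset.univ.filter (fun i => x i = true)) : Set (Fin t)) := by
    intro i hi i' hi' he
    simp only [Finset.coe_filter, Set.mem_setOf_eq] at hi hi'
    by_contra hne
    rcases lt_or_gt_of_ne (fun h : i = i' => hne h) with h | h
    · have := hgap i i' h hi.2 hi'.2
      have h2 : ((i:ℕ) + (d + 1)) / (d+1) ≤ (i':ℕ)/(d+1) :=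
        Nat.div_le_div_right (by omega)
      rw [Nat.add_div_right _ (show 0 < d+1 by omega)] at h2
      simp only at he; omega
    · have := hgap i' i h hi'.2 hi.2
      have h2 : ((i':ℕ) + (d + 1)) / (d+1) ≤ (i:ℕ)/(d+1) :=
        Nat.div_le_div_right (by omega)
      rw [Nat.add_div_right _ (show 0 < d+1 by omega)] at h2
      simp only at he; omega
  have hmaps : ∀ i ∈ (Finset.univ.filter (fun i => x i = true)),
      (i : ℕ) / (d+1) ∈ Finset.range (t / (d+1)) := by
    intro i _
    exact Finset.mem_range.mpr (Nat.div_lt_div_of_lt_of_dvd hdvd i.isLt)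
  calc (Finset.univ.filter (fun i => x i = true)).card
      ≤ (Finset.range (t / (d+1))).card := Finset.card_le_card_of_injOn _ hmaps hinj
    _ = t / (d+1) := Finset.card_range _

-- L5: lower bound on binomial coefficient
lemma pow_le_choose_mul17 (k : ℕ) : ∀ n : ℕ, k ≤ n → n ^ k ≤ n.choose k * k ^ k := by
  induction k with
  | zero => simp
  | succ k ih =>
    intro n hn
    obtain ⟨m, rfl⟩ : ∃ m, n = m + 1 := ⟨n - 1, by omega⟩
    have hkm : k ≤ m := by omega
    have key : (m+1) ^ k * k ^ k ≤ m.choose k * k ^ k * (k+1) ^ k := by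
      calc (m+1) ^ k * k ^ k = ((m+1) * k) ^ k := by rw [mul_pow]
        _ ≤ (m * (k+1)) ^ k := Nat.pow_le_pow_left (by nlinarith) k
        _ = m ^ k * (k+1) ^ k := by rw [mul_pow]
        _ ≤ m.choose k * k ^ k * (k+1) ^ k := Nat.mul_le_mul_right _ (ih m hkm)
    have hsucc : (m+1) * m.choose k = (m+1).choose (k+1) * (k+1) :=
      Nat.add_one_mul_choose_eq m k
    rcases Nat.eq_zero_or_pos k with rfl | hk
    · simp [Nat.choose_one_right]
    · have key2 : (m+1) ^ k ≤ m.choose k * (k+1) ^ k :=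
        Nat.le_of_mul_le_mul_right (by linarith [key]) (show 0 < k ^ k from Nat.pow_pos hk)
      calc (m+1) ^ (k+1) = (m+1) * (m+1) ^ k := by ring
        _ ≤ (m+1) * (m.choose k * (k+1) ^ k) := Nat.mul_le_mul_left _ key2
        _ = ((m+1) * m.choose k) * (k+1) ^ k := by ring
        _ = (m+1).choose (k+1) * (k+1) ^ (k+1) := by rw [hsucc]; ring

-- finiteness of the solution space
lemma finite_S17 {t k s : ℕ} :
    Finite {y : Fin t → ℕ // (∀ i, y i ≤ k) ∧ (∑ i, y i) ≤ s} := by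
  apply Finite.of_injective (fun y => (fun i => (⟨y.1 i, Nat.lt_succ_of_le (y.2.1 i)⟩ : Fin (k+1))))
  intro y y' h
  ext i
  exact congrArg Fin.val (congrFun h i)

-- L3: cardinality bound via supports
lemma card_S_le17 (t k s : ℕ) :
    Nat.card {y : Fin t → ℕ // (∀ i, y i ≤ k) ∧ (∑ i, y i) ≤ s} ≤
      (Finset.univ.filter (fun A : Finset (Fin t) => A.card ≤ s)).card * (k+1)^s := by
  classical
  set T := Σ A : {A : Finset (Fin t) // A.card ≤ s}, (↥A.1 → Fin k) with hT
  have hsupp : ∀ y : {y : Fin t → ℕ // (∀ i, y i ≤ k) ∧ (∑ i, y i) ≤ s},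
      (Finset.univ.filter (fun i => y.1 i ≠ 0)).card ≤ s := by
    intro y
    calc (Finset.univ.filter (fun i => y.1 i ≠ 0)).card
        = ∑ i ∈ Finset.univ.filter (fun i => y.1 i ≠ 0), 1 := by
          rw [Finset.card_eq_sum_ones]
      _ ≤ ∑ i ∈ Finset.univ.filter (fun i => y.1 i ≠ 0), y.1 i := by
          apply Finset.sum_le_sum
          intro i hi
          simp only [Finset.mem_filter] at hi
          omega
      _ ≤ ∑ i, y.1 i := Finset.sum_le_sum_of_subset (Finset.filter_subset _ _)
      _ ≤ s := y.2.2
  set Φ : {y : Fin t → ℕ // (∀ i, y i ≤ k) ∧ (∑ i, y i) ≤ s} → T :=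
    fun y => ⟨⟨Finset.univ.filter (fun i => y.1 i ≠ 0), hsupp y⟩,
      fun i => ⟨y.1 i.1 - 1, by
        have h1 := y.2.1 i.1
        have h2 : y.1 i.1 ≠ 0 := by
          have := i.2; simp only [Finset.mem_filter] at this; exact this.2
        omega⟩⟩ with hΦ
  set rec : T → (Fin t → ℕ) := fun z i => if h : i ∈ z.1.1 then (z.2 ⟨i, h⟩).1 + 1 else 0
    with hrec
  have hrecΦ : ∀ y, rec (Φ y) = y.1 := by
    intro y
    funext i
    simp only [hrec, hΦ]
    by_cases hi : y.1 i ≠ 0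
    · rw [dif_pos (by simp [hi])]
      omega
    · rw [dif_neg (by simp [hi])]
      omega
  have hΦinj : Function.Injective Φ := by
    intro y y' h
    apply Subtype.ext
    rw [← hrecΦ y, ← hrecΦ y', h]
  have hle := Nat.card_le_card_of_injective Φ hΦinj
  have hcardT : Nat.card T = ∑ A ∈ Finset.univ.filter (fun A : Finset (Fin t) => A.card ≤ s),
      k ^ A.card := by
    rw [Nat.card_eq_fintype_card, Fintype.card_sigma]
    calc ∑ A : {A : Finset (Fin t) // A.card ≤ s}, Fintype.card (↥A.1 → Fin k)
        = ∑ A : {A : Finset (Fin t) // A.card ≤ s}, k ^ A.1.card := by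
          apply Finset.sum_congr rfl
          intro A _
          rw [Fintype.card_fun, Fintype.card_fin, Fintype.card_coe]
      _ = ∑ A ∈ Finset.univ.filter (fun A : Finset (Fin t) => A.card ≤ s), k ^ A.card :=
          (Finset.sum_subtype _ (fun A => by simp) (fun A : Finset (Fin t) => k ^ A.card)).symm
  refine hle.trans ?_
  rw [hcardT]
  calc ∑ A ∈ Finset.univ.filter (fun A : Finset (Fin t) => A.card ≤ s), k ^ A.card
      ≤ ∑ A ∈ Finset.univ.filter (fun A : Finset (Fin t) => A.card ≤ s), (k+1) ^ s := by
        apply Finset.sum_le_sum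
        intro A hA
        simp only [Finset.mem_filter] at hA
        exact (Nat.pow_le_pow_left (Nat.le_succ k) A.card).trans
          (Nat.pow_le_pow_right (Nat.succ_pos k) hA.2)
    _ = (Finset.univ.filter (fun A : Finset (Fin t) => A.card ≤ s)).card * (k+1)^s := by
        rw [Finset.sum_const, smul_eq_mul]

-- L4: entropy-style bound for the number of small subsets
lemma entropy_count17 (t s : ℕ) (hst : s ≤ t) (p : ℝ) (hp0 : 0 < p) (hp1 : p ≤ 1/2) :
    ((Finset.univ.filter (fun A : Finset (Fin t) => A.card ≤ s)).card : ℝ)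
      * (p ^ s * (1-p) ^ (t-s)) ≤ 1 := by
  classical
  have hq0 : (0:ℝ) ≤ 1 - p := by linarith
  have hpq : p ≤ 1 - p := by linarith
  have hone : (1:ℝ) = ∑ A : Finset (Fin t), p ^ A.card * (1-p) ^ (t - A.card) := by
    have := Fintype.prod_add (fun _ : Fin t => p) (fun _ : Fin t => 1 - p)
    simp only [Finset.prod_const] at this
    have h2 : ∀ A : Finset (Fin t), (Aᶜ : Finset (Fin t)).card = t - A.card := by
      intro A
      rw [Finset.card_compl, Fintype.card_fin]
    calc (1:ℝ) = (p + (1-p)) ^ (Finset.univ : Finset (Fin t)).card := by norm_num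
      _ = ∑ A : Finset (Fin t), p ^ A.card * (1-p) ^ (Aᶜ : Finset (Fin t)).card := this
      _ = ∑ A : Finset (Fin t), p ^ A.card * (1-p) ^ (t - A.card) := by
          apply Finset.sum_congr rfl
          intro A _
          rw [h2]
  have key : ∀ A : Finset (Fin t), A.card ≤ s →
      p ^ s * (1-p) ^ (t-s) ≤ p ^ A.card * (1-p) ^ (t - A.card) := by
    intro A hA
    have : p ^ s * (1-p) ^ (t-s) = p ^ A.card * (p ^ (s - A.card) * (1-p) ^ (t-s)) := by
      rw [← mul_assoc, ← pow_add]
      congr 2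
      omega
    rw [this]
    apply mul_le_mul_of_nonneg_left _ (pow_nonneg hp0.le _)
    calc p ^ (s - A.card) * (1-p) ^ (t-s) ≤ (1-p) ^ (s - A.card) * (1-p) ^ (t-s) := by
          apply mul_le_mul_of_nonneg_right (pow_le_pow_left₀ hp0.le hpq _) (pow_nonneg hq0 _)
      _ = (1-p) ^ (t - A.card) := by
          rw [← pow_add]
          congr 1
          omega
  calc ((Finset.univ.filter (fun A : Finset (Fin t) => A.card ≤ s)).card : ℝ)
        * (p ^ s * (1-p) ^ (t-s))
      = ∑ _A ∈ Finset.univ.filter (fun A : Finset (Fin t) => A.card ≤ s),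
          p ^ s * (1-p) ^ (t-s) := by rw [Finset.sum_const, nsmul_eq_mul]
    _ ≤ ∑ A ∈ Finset.univ.filter (fun A : Finset (Fin t) => A.card ≤ s),
          p ^ A.card * (1-p) ^ (t - A.card) := by
        apply Finset.sum_le_sum
        intro A hA
        exact key A (by simpa using hA)
    _ ≤ ∑ A : Finset (Fin t), p ^ A.card * (1-p) ^ (t - A.card) := by
        apply Finset.sum_le_sum_of_subset_of_nonneg (Finset.filter_subset _ _)
        intro A _ _
        exact mul_nonneg (pow_nonneg hp0.le _) (pow_nonneg hq0 _)
    _ = 1 := hone.symm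

end Aux

def RunLengthConstrained (t d : ℕ) (x : Fin t → Bool) : Prop :=
  ∀ i i' : Fin t, i < i' → x i = true → x i' = true →
    d ≤ (Finset.univ.filter (fun j : Fin t => i < j ∧ j < i' ∧ x j = false)).card

noncomputable def binEnt (p : ℝ) : ℝ :=
  -p * Real.logb 2 p - (1 - p) * Real.logb 2 (1 - p)

/-- Counting bound for runlength-constrained quantitative group testing. -/
theorem stmt17 (t n d k : ℕ) (ht : 0 < t) (hn : 0 < n) (hk : 0 < k) (hd : 0 < d)
    (hdk : 2 * k ≤ d) (hdvd : (d + 1) ∣ t)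
    (M : Fin t → Fin n → Bool)
    (hrl : ∀ j : Fin n, RunLengthConstrained t d (fun i => M i j))
    (hinj : ∀ x x' : Fin n → Bool,
      (Finset.univ.filter (fun j => x j = true)).card = k →
      (Finset.univ.filter (fun j => x' j = true)).card = k →
      (fun i : Fin t => ∑ j ∈ Finset.univ.filter (fun j => x j = true),
        (if M i j = true then 1 else 0)) =
      (fun i : Fin t => ∑ j ∈ Finset.univ.filter (fun j => x' j = true),
        (if M i j = true then 1 else 0)) →
      x = x') :
    Real.logb 2 (Nat.choose n k) ≤
      Real.logb 2 (Nat.card {y : Fin t → ℕ //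
        (∀ i, y i ≤ k) ∧ (∑ i, y i) ≤ k * t / (d + 1)}) ∧
    (k : ℝ) * Real.logb 2 ((n : ℝ) / k) ≤
      (t : ℝ) * binEnt ((k : ℝ) / (d + 1)) +
        ((k : ℝ) * t / (d + 1)) * Real.logb 2 ((k : ℝ) + 1) := by
  classical
  set s : ℕ := k * t / (d + 1) with hs
  -- step 1 : choose n k ≤ Nat.card S
  have hSfin : Finite {y : Fin t → ℕ // (∀ i, y i ≤ k) ∧ (∑ i, y i) ≤ s} := finite_S17
  have hSne : Nonempty {y : Fin t → ℕ // (∀ i, y i ≤ k) ∧ (∑ i, y i) ≤ s} :=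
    ⟨⟨fun _ => 0, fun _ => Nat.zero_le k, by simp⟩⟩
  have hmuldiv : s = k * (t / (d+1)) := Nat.mul_div_assoc k hdvd
  have hchoose_le : n.choose k ≤
      Nat.card {y : Fin t → ℕ // (∀ i, y i ≤ k) ∧ (∑ i, y i) ≤ s} := by
    set Ψ : {A : Finset (Fin n) // A.card = k} →
        {y : Fin t → ℕ // (∀ i, y i ≤ k) ∧ (∑ i, y i) ≤ s} :=
      fun A => ⟨fun i => ∑ j ∈ A.1, (if M i j = true then 1 else 0), by
        constructor
        · intro i
          calc ∑ j ∈ A.1, (if M i j = true then 1 else 0)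
              ≤ ∑ _j ∈ A.1, 1 := Finset.sum_le_sum (fun j _ => by split <;> omega)
            _ = k := by rw [Finset.sum_const, smul_eq_mul, mul_one, A.2]
        · calc ∑ i, ∑ j ∈ A.1, (if M i j = true then 1 else 0)
              = ∑ j ∈ A.1, ∑ i, (if M i j = true then 1 else 0) := Finset.sum_comm
            _ ≤ ∑ _j ∈ A.1, t / (d+1) := by
                apply Finset.sum_le_sum
                intro j _
                rw [← Finset.card_filter]
                exact colwt17 hdvd (fun i => M i j) (hrl j)
            _ = k * (t / (d+1)) := by rw [Finset.sum_const, smul_eq_mul, A.2]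
            _ = s := hmuldiv.symm⟩ with hΨ
    have hΨinj : Function.Injective Ψ := by
      intro A A' h
      have hval := congrArg Subtype.val h
      set x : Fin n → Bool := fun j => decide (j ∈ A.1) with hx
      set x' : Fin n → Bool := fun j => decide (j ∈ A'.1) with hx'
      have hfx : Finset.univ.filter (fun j => x j = true) = A.1 := by
        ext j; simp [hx]
      have hfx' : Finset.univ.filter (fun j => x' j = true) = A'.1 := by
        ext j; simp [hx']
      have := hinj x x' (by rw [hfx]; exact A.2) (by rw [hfx']; exact A'.2) (by
        rw [hfx, hfx']
        exact hval)
      apply Subtype.ext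
      ext j
      have hj := congrFun this j
      simp only [hx, hx', decide_eq_decide] at hj
      exact hj
    have := Nat.card_le_card_of_injective Ψ hΨinj
    rwa [Nat.card_eq_fintype_card, Fintype.card_finset_len, Fintype.card_fin] at this
  have hNpos : 0 < Nat.card {y : Fin t → ℕ // (∀ i, y i ≤ k) ∧ (∑ i, y i) ≤ s} :=
    Nat.card_pos
  constructor
  · rcases Nat.eq_zero_or_pos (n.choose k) with h0 | hpos
    · rw [h0]
      simp only [Nat.cast_zero, Real.logb_zero]
      exact Real.logb_nonneg one_lt_two (by exact_mod_cast hNpos)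
    · exact Real.logb_le_logb_of_le one_lt_two (by exact_mod_cast hpos)
        (by exact_mod_cast hchoose_le)
  · -- second conjunct
    set p : ℝ := (k : ℝ) / (d + 1) with hp
    have hd1 : (0:ℝ) < (d:ℝ) + 1 := by positivity
    have hp0 : 0 < p := by positivity
    have hphalf : p ≤ 1/2 := by
      rw [hp, div_le_iff₀ hd1]
      have h := (show (2*(k:ℝ)) ≤ (d:ℝ) by exact_mod_cast hdk)
      linarith
    have hdvd2 : (d+1) ∣ k * t := Dvd.dvd.mul_left hdvd k
    have hts : s * (d+1) = k * t := Nat.div_mul_cancel hdvd2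
    have htsR : (s:ℝ) * ((d:ℝ)+1) = (k:ℝ) * t := by exact_mod_cast hts
    have hscast : (s:ℝ) = p * t := by
      rw [hp]
      field_simp
      linarith [htsR]
    have hst : s ≤ t := by
      have hkd1 : k ≤ d + 1 :=
        le_trans (le_trans (Nat.le_mul_of_pos_left k Nat.zero_lt_two) hdk) (Nat.le_succ d)
      have h1 : k * t ≤ (d+1) * t := Nat.mul_le_mul_right t hkd1
      have h2 : (d+1) * t / (d+1) = t := Nat.mul_div_cancel_left t (Nat.succ_pos d)
      have h3 : k * t / (d+1) ≤ (d+1) * t / (d+1) := Nat.div_le_div_right h1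
      rw [hs]
      exact h3.trans (le_of_eq h2)
    have htmscast : ((t - s : ℕ) : ℝ) = (1 - p) * t := by
      rw [Nat.cast_sub hst, hscast]; ring
    set Q : ℝ := p ^ s * (1-p) ^ (t-s) with hQdef
    have hQ0 : 0 < Q := by
      apply mul_pos (pow_pos hp0 _) (pow_pos (by linarith) _)
    set AF := Finset.univ.filter (fun A : Finset (Fin t) => A.card ≤ s) with hAF
    have hAQ : (AF.card : ℝ) * Q ≤ 1 := entropy_count17 t s hst p hp0 hphalf
    have hAFpos : 0 < AF.card := Finset.card_pos.mpr ⟨∅, by simp [hAF]⟩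
    have hNle : Nat.card {y : Fin t → ℕ // (∀ i, y i ≤ k) ∧ (∑ i, y i) ≤ s}
        ≤ AF.card * (k+1)^s := card_S_le17 t k s
    -- logb computations
    have hlogQ : Real.logb 2 (1/Q) = (t:ℝ) * binEnt p := by
      rw [one_div, Real.logb_inv, hQdef,
        Real.logb_mul (ne_of_gt (pow_pos hp0 _)) (ne_of_gt (pow_pos (by linarith) _)),
        Real.logb_pow, Real.logb_pow, binEnt, hscast, htmscast]
      ring
    have hlogA : Real.logb 2 (AF.card) ≤ (t:ℝ) * binEnt p := by
      rw [← hlogQ]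
      have h4 : (AF.card:ℝ) ≤ 1/Q := by
        rw [le_div_iff₀ hQ0]
        exact hAQ
      exact Real.logb_le_logb_of_le one_lt_two (by exact_mod_cast hAFpos) h4
    have hRHS : Real.logb 2 ((AF.card * (k+1)^s : ℕ)) ≤
        (t : ℝ) * binEnt p + ((k : ℝ) * t / (d + 1)) * Real.logb 2 ((k : ℝ) + 1) := by
      have h1 : ((AF.card * (k+1)^s : ℕ) : ℝ) = (AF.card : ℝ) * ((k:ℝ)+1)^s := by
        push_cast; ring
      rw [h1, Real.logb_mul (by exact_mod_cast hAFpos.ne') (by positivity), Real.logb_pow]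
      have h2 : (k:ℝ) * t / (d+1) = (s:ℝ) := by rw [hscast, hp]; ring
      rw [h2]
      linarith [hlogA]
    rcases lt_or_ge n k with hnk | hkn
    · -- trivial case n < k
      have hLHS : (k:ℝ) * Real.logb 2 ((n:ℝ)/k) ≤ 0 := by
        apply mul_nonpos_of_nonneg_of_nonpos (by positivity)
        apply Real.logb_nonpos one_lt_two (by positivity)
        rw [div_le_one (by exact_mod_cast hk)]
        exact_mod_cast hnk.le
      have hEnt : 0 ≤ binEnt p := by
        rw [binEnt]
        have h1 : Real.logb 2 p ≤ 0 :=
          Real.logb_nonpos one_lt_two hp0.le (by linarith)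
        have h2 : Real.logb 2 (1-p) ≤ 0 :=
          Real.logb_nonpos one_lt_two (by linarith) (by linarith)
        have e1 : 0 ≤ p * (-Real.logb 2 p) := mul_nonneg hp0.le (neg_nonneg.mpr h1)
        have e2 : 0 ≤ (1-p) * (-Real.logb 2 (1-p)) :=
          mul_nonneg (by linarith) (neg_nonneg.mpr h2)
        linarith [e1, e2]
      have h3 : 0 ≤ ((k : ℝ) * t / (d + 1)) * Real.logb 2 ((k : ℝ) + 1) := by
        apply mul_nonneg (by positivity)
        apply Real.logb_nonneg one_lt_two
        norm_num
      exact le_trans hLHS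
        (add_nonneg (mul_nonneg (Nat.cast_nonneg t) hEnt) h3)
    · -- main case k ≤ n
      have hchoosepos : 0 < n.choose k := Nat.choose_pos hkn
      have hpow : ((n:ℝ)/k) ^ k ≤ (n.choose k : ℝ) := by
        have := pow_le_choose_mul17 k n hkn
        have hcast : (n:ℝ)^k ≤ (n.choose k : ℝ) * (k:ℝ)^k := by exact_mod_cast this
        rw [div_pow, div_le_iff₀ (by positivity)]
        exact hcast
      have hnkpos : (0:ℝ) < ((n:ℝ)/k)^k := by positivity
      calc (k : ℝ) * Real.logb 2 ((n : ℝ) / k)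
          = Real.logb 2 (((n:ℝ)/k)^k) := (Real.logb_pow _ _ _).symm
        _ ≤ Real.logb 2 ((AF.card * (k+1)^s : ℕ)) := by
            apply Real.logb_le_logb_of_le one_lt_two hnkpos
            refine hpow.trans ?_
            have : (n.choose k : ℕ) ≤ (AF.card * (k+1)^s : ℕ) := hchoose_le.trans hNle
            exact_mod_cast this
        _ ≤ (t : ℝ) * binEnt p + ((k : ℝ) * t / (d + 1)) * Real.logb 2 ((k : ℝ) + 1) := hRHS
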